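/- Let Ω ⊂ R^{2n+1} be open and u: Ω → R continuous. If ξ_k → ξ₀ in Ω, p_k ∈ ∂_H u(ξ_k), and p_k → p₀ in R^{2n}, then p₀ ∈ ∂_H u(ξ₀). (Closedness of the graph of the horizontal normal mapping, which yields upper semicontinuity.) -/
import Mathlib


open scoped BigOperators

/-- A point of the Heisenberg group `ℍⁿ` in real coordinates `(x, y, t)`. -/
abbrev Hpt (n : ℕ) := (Fin n → ℝ) × (Fin n → ℝ) × ℝ

/-- Euclidean dot product on `ℝⁿ`. -/
def dotR {n : ℕ} (a b : Fin n → ℝ) : ℝ := ∑ i, a i * b i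

/-- Heisenberg group law. -/
def hmul {n : ℕ} (ξ η : Hpt n) : Hpt n :=
  (ξ.1 + η.1, ξ.2.1 + η.2.1,
    ξ.2.2 + η.2.2 + 2 * (dotR ξ.2.1 η.1 - dotR ξ.1 η.2.1))

/-- Heisenberg group inverse. -/
def hinv {n : ℕ} (ξ : Hpt n) : Hpt n := (-ξ.1, -ξ.2.1, -ξ.2.2)

/-- Heisenberg dilation `δ_l`. -/
def hdil {n : ℕ} (l : ℝ) (ξ : Hpt n) : Hpt n := (l • ξ.1, l • ξ.2.1, l ^ 2 * ξ.2.2)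

/-- The Korányi gauge `N(x,y,t) = ((|x|²+|y|²)² + t²)^(1/4)`. -/
noncomputable def KN {n : ℕ} (ξ : Hpt n) : ℝ :=
  ((dotR ξ.1 ξ.1 + dotR ξ.2.1 ξ.2.1) ^ 2 + ξ.2.2 ^ 2) ^ ((1 : ℝ) / 4)

/-- The Korányi–Cygan metric. -/
noncomputable def dH {n : ℕ} (ξ η : Hpt n) : ℝ := KN (hmul (hinv η) ξ)

/-- The horizontal plane at `ξ₀`. -/
def Hplane {n : ℕ} (ξ₀ : Hpt n) : Set (Hpt n) :=
  {ξ | ξ.2.2 = ξ₀.2.2 + 2 * (dotR ξ.1 ξ₀.2.1 - dotR ξ₀.1 ξ.2.1)}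

/-- Projection onto the first `2n` coordinates. -/
def Pr1 {n : ℕ} (ξ : Hpt n) : (Fin n → ℝ) × (Fin n → ℝ) := (ξ.1, ξ.2.1)

/-- Dot product on `ℝ^{2n}`. -/
def dot2n {n : ℕ} (p q : (Fin n → ℝ) × (Fin n → ℝ)) : ℝ := dotR p.1 q.1 + dotR p.2 q.2

/-- The horizontal subdifferential of `u` (with domain `Ω`) at `ξ₀`. -/
def subdiffH {n : ℕ} (Ω : Set (Hpt n)) (u : Hpt n → ℝ) (ξ₀ : Hpt n) :
    Set ((Fin n → ℝ) × (Fin n → ℝ)) :=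
  {p | ∀ ξ ∈ Ω ∩ Hplane ξ₀, u ξ ≥ u ξ₀ + dot2n p (Pr1 ξ - Pr1 ξ₀)}

/-- `H`-convexity of a set. -/
def HConvexSet {n : ℕ} (S : Set (Hpt n)) : Prop :=
  ∀ ξ₁ ∈ S, ∀ ξ₂ ∈ S, ξ₁ ∈ Hplane ξ₂ → ∀ l ∈ Set.Icc (0 : ℝ) 1,
    hmul ξ₁ (hdil l (hmul (hinv ξ₁) ξ₂)) ∈ S

/-- `H`-convexity of a function on a set. -/
def HConvexOn {n : ℕ} (S : Set (Hpt n)) (u : Hpt n → ℝ) : Prop :=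
  ∀ ξ₁ ∈ S, ∀ ξ₂ ∈ S, ξ₁ ∈ Hplane ξ₂ → ∀ l ∈ Set.Icc (0 : ℝ) 1,
    u (hmul ξ₁ (hdil l (hmul (hinv ξ₁) ξ₂))) ≤ (1 - l) * u ξ₁ + l * u ξ₂

/-- Horizontal boundedness: the horizontal slices have uniformly bounded diameter. -/
def horizBounded {n : ℕ} (Ω : Set (Hpt n)) : Prop :=
  ∃ M : ℝ, ∀ ξ ∈ Ω, ∀ ζ ∈ Ω ∩ Hplane ξ, ∀ η ∈ Ω ∩ Hplane ξ, dH ζ η ≤ M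

set_option maxHeartbeats 1000000 in
/-- Closedness of the graph of the horizontal normal mapping of a continuous function. -/
theorem subdiffH_closed_graph {n : ℕ} (Ω : Set (Hpt n)) (hΩ : IsOpen Ω)
    (u : Hpt n → ℝ) (hu : ContinuousOn u Ω)
    (ξseq : ℕ → Hpt n) (pseq : ℕ → (Fin n → ℝ) × (Fin n → ℝ))
    (ξ₀ : Hpt n) (p₀ : (Fin n → ℝ) × (Fin n → ℝ))
    (hmem : ∀ k, ξseq k ∈ Ω) (hξ₀ : ξ₀ ∈ Ω)
    (hξlim : Filter.Tendsto ξseq Filter.atTop (nhds ξ₀))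
    (hp : ∀ k, pseq k ∈ subdiffH Ω u (ξseq k))
    (hplim : Filter.Tendsto pseq Filter.atTop (nhds p₀)) :
    p₀ ∈ subdiffH Ω u ξ₀ := by
  intro ζ hζ
  obtain ⟨hζΩ, hζH⟩ := hζ
  set ζk : ℕ → Hpt n := fun k =>
    (ζ.1, ζ.2.1, (ξseq k).2.2 + 2 * (dotR ζ.1 (ξseq k).2.1 - dotR (ξseq k).1 ζ.2.1)) with hζkdef
  have hζkH : ∀ k, ζk k ∈ Hplane (ξseq k) := fun k => rfl
  have hcdR : Continuous (fun ab : (Fin n → ℝ) × (Fin n → ℝ) => dotR ab.1 ab.2) := by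
    unfold dotR
    exact continuous_finset_sum _ fun i _ =>
      ((continuous_apply i).comp continuous_fst).mul ((continuous_apply i).comp continuous_snd)
  have hc3 : Continuous (fun ξ : Hpt n => ξ.2.2 + 2 * (dotR ζ.1 ξ.2.1 - dotR ξ.1 ζ.2.1)) := by
    refine continuous_snd.snd.add (continuous_const.mul (Continuous.sub ?_ ?_))
    · exact hcdR.comp (continuous_const.prodMk continuous_snd.fst)
    · exact hcdR.comp (continuous_fst.prodMk continuous_const)
  have hζeq : ζ = (ζ.1, ζ.2.1, ξ₀.2.2 + 2 * (dotR ζ.1 ξ₀.2.1 - dotR ξ₀.1 ζ.2.1)) :=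
    Prod.ext rfl (Prod.ext rfl hζH)
  have hζklim : Filter.Tendsto ζk Filter.atTop (nhds ζ) := by
    rw [hζeq]
    exact tendsto_const_nhds.prodMk_nhds
      (tendsto_const_nhds.prodMk_nhds ((hc3.tendsto ξ₀).comp hξlim))
  have hev : ∀ᶠ k in Filter.atTop, ζk k ∈ Ω := hζklim.eventually (hΩ.eventually_mem hζΩ)
  have hineq : ∀ᶠ k in Filter.atTop,
      u (ξseq k) + dot2n (pseq k) (Pr1 ζ - Pr1 (ξseq k)) ≤ u (ζk k) := by
    filter_upwards [hev] with k hk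
    exact hp k (ζk k) ⟨hk, hζkH k⟩
  have hul : Filter.Tendsto (fun k => u (ζk k)) Filter.atTop (nhds (u ζ)) :=
    (hu.continuousAt (hΩ.mem_nhds hζΩ)).tendsto.comp hζklim
  have hur : Filter.Tendsto (fun k => u (ξseq k)) Filter.atTop (nhds (u ξ₀)) :=
    (hu.continuousAt (hΩ.mem_nhds hξ₀)).tendsto.comp hξlim
  have hcd2 : Continuous (fun pq : ((Fin n → ℝ) × (Fin n → ℝ)) × ((Fin n → ℝ) × (Fin n → ℝ)) =>
      dot2n pq.1 pq.2) := by
    unfold dot2n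
    exact (hcdR.comp (continuous_fst.fst.prodMk continuous_snd.fst)).add
      (hcdR.comp (continuous_fst.snd.prodMk continuous_snd.snd))
  have hPr1 : Filter.Tendsto (fun k => Pr1 (ξseq k)) Filter.atTop (nhds (Pr1 ξ₀)) := by
    have : Continuous (fun ξ : Hpt n => Pr1 ξ) := continuous_fst.prodMk continuous_snd.fst
    exact (this.tendsto ξ₀).comp hξlim
  have hdot : Filter.Tendsto (fun k => dot2n (pseq k) (Pr1 ζ - Pr1 (ξseq k)))
      Filter.atTop (nhds (dot2n p₀ (Pr1 ζ - Pr1 ξ₀))) :=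
    (hcd2.tendsto (p₀, Pr1 ζ - Pr1 ξ₀)).comp
      (hplim.prodMk_nhds (tendsto_const_nhds.sub hPr1))
  exact le_of_tendsto_of_tendsto (hur.add hdot) hul hineq
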